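/- For every n ≥ 6, every graph in the family 𝓕_n contains exactly h₀(n) induced 6-cycles, namely exactly the 6-cycles of the form u₁–a–u₂–b–u₃–c with a ∈ A, b ∈ B, c ∈ C. -/

import Mathlib

open SimpleGraph

/-- `H` is a minor of `G`: there is a family of nonempty, connected, pairwise disjoint
branch sets in `G`, one for each vertex of `H`, such that adjacent vertices of `H`
have adjacent branch sets. -/
def IsMinorOf {W : Type*} {V : Type*} (H : SimpleGraph W) (G : SimpleGraph V) : Prop :=
  ∃ φ : W → Set V,
    (∀ w, (G.induce (φ w)).Connected) ∧
    (Pairwise fun w₁ w₂ => Disjoint (φ w₁) (φ w₂)) ∧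
    ∀ ⦃w₁ w₂⦄, H.Adj w₁ w₂ → ∃ x ∈ φ w₁, ∃ y ∈ φ w₂, G.Adj x y

/-- A graph is planar iff (by Wagner's theorem) it has no `K₅` minor and no `K₃,₃` minor. -/
def SimpleGraph.Planar {V : Type*} (G : SimpleGraph V) : Prop :=
  ¬ IsMinorOf (completeGraph (Fin 5)) G ∧
  ¬ IsMinorOf (completeBipartiteGraph (Fin 3) (Fin 3)) G

/-- `s` is a set of `m` vertices of `G` whose induced subgraph is a cycle of length `m`. -/
def IsIndCycle {V : Type*} (G : SimpleGraph V) (m : ℕ) (s : Finset V) : Prop :=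
  s.card = m ∧ Nonempty ((G.induce (s : Set V)) ≃g (cycleGraph m))

/-- The number of induced 6-cycles of `G`. -/
noncomputable def c6Count {V : Type*} [Fintype V] (G : SimpleGraph V) : ℕ :=
  {s : Finset V | IsIndCycle G 6 s}.ncard

/-- The number of induced 6-cycles of `G` containing the vertex `v`. -/
noncomputable def c6CountAt {V : Type*} [Fintype V] (G : SimpleGraph V) (v : V) : ℕ :=
  {s : Finset V | IsIndCycle G 6 s ∧ v ∈ s}.ncard

/-- `f_I(n, C₆)`: the maximum number of induced 6-cycles over all planar graphs
on `n` vertices. -/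
noncomputable def fI (n : ℕ) : ℕ :=
  sSup {m | ∃ G : SimpleGraph (Fin n), G.Planar ∧ c6Count G = m}

def h0 (n : ℕ) : ℕ :=
  if n % 3 = 0 then (n / 3 - 1) ^ 3
  else if n % 3 = 1 then ((n - 4) / 3) ^ 2 * ((n - 1) / 3)
  else ((n - 2) / 3) ^ 2 * ((n - 5) / 3)

def h1 (n : ℕ) : ℕ :=
  if n % 3 = 0 then (n / 3 - 1) ^ 2
  else if n % 3 = 1 then ((n - 4) / 3) ^ 2
  else ((n - 2) / 3) * ((n - 5) / 3)

/-- `x` and `y` are principal neighbours in `G`: they are adjacent and some induced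
6-cycle of `G` contains both of them. -/
def PrincipalNbr {V : Type*} (G : SimpleGraph V) (x y : V) : Prop :=
  G.Adj x y ∧ ∃ s : Finset V, IsIndCycle G 6 s ∧ x ∈ s ∧ y ∈ s

/-- `X^{uvw}`: the vertices of `G - {u,v,w}` lying in some induced 6-cycle of `G`
containing the path `u-v-w` (i.e. containing `u`, `v` and `w`). -/
def Xset {V : Type*} (G : SimpleGraph V) (u v w : V) : Set V :=
  {x | x ≠ u ∧ x ≠ v ∧ x ≠ w ∧
    ∃ s : Finset V, IsIndCycle G 6 s ∧ u ∈ s ∧ v ∈ s ∧ w ∈ s ∧ x ∈ s}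

def X1set {V : Type*} (G : SimpleGraph V) (u v w : V) : Set V :=
  Xset G u v w ∩ G.neighborSet u

def X3set {V : Type*} (G : SimpleGraph V) (u v w : V) : Set V :=
  Xset G u v w ∩ G.neighborSet w

def X2set {V : Type*} (G : SimpleGraph V) (u v w : V) : Set V :=
  Xset G u v w \ (X1set G u v w ∪ X3set G u v w)

/-- The bipartite subgraph of `G` induced between the disjoint vertex sets `S` and `T`:
the graph on `S ∪ T` whose edges are exactly the edges of `G` with one endpoint in `S`
and one in `T`. -/
def bipBetween {V : Type*} (G : SimpleGraph V) (S T : Set V) : SimpleGraph ↑(S ∪ T) where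
  Adj x y := G.Adj x y ∧ ((↑x ∈ S ∧ ↑y ∈ T) ∨ (↑x ∈ T ∧ ↑y ∈ S))
  symm := by
    constructor
    intro x y ⟨h, h2⟩
    exact ⟨h.symm, (h2.imp And.symm And.symm).symm⟩
  loopless := by
    constructor
    intro x ⟨h, _⟩
    exact G.irrefl h

/-- `a b c d e f` are the vertices, in cyclic order, of an induced 6-cycle of `G`. -/
def IsIndC6On {V : Type*} [DecidableEq V] (G : SimpleGraph V) (a b c d e f : V) : Prop :=
  ([a, b, c, d, e, f] : List V).Nodup ∧
  IsIndCycle G 6 {a, b, c, d, e, f} ∧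
  G.Adj a b ∧ G.Adj b c ∧ G.Adj c d ∧ G.Adj d e ∧ G.Adj e f ∧ G.Adj f a ∧
  ¬ G.Adj a c ∧ ¬ G.Adj a d ∧ ¬ G.Adj a e ∧
  ¬ G.Adj b d ∧ ¬ G.Adj b e ∧ ¬ G.Adj b f ∧
  ¬ G.Adj c e ∧ ¬ G.Adj c f ∧ ¬ G.Adj d f

/-- `x` and `y` are consecutive entries (in either order) of the list `l`. -/
def ListConsec {V : Type*} (l : List V) (x y : V) : Prop :=
  ∃ i : ℕ, (l[i]? = some x ∧ l[i + 1]? = some y) ∨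
           (l[i]? = some y ∧ l[i + 1]? = some x)

/-- The data witnessing that `G` belongs to the family `𝓕_n` (with `n = Fintype.card V`):
the vertex set is partitioned as `{u₁,u₂,u₃} ∪ A ∪ B ∪ C` with `|A|, |B|, |C|` as equal
as possible, every vertex of `A` is joined to `u₁, u₂`, every vertex of `B` to `u₂, u₃`,
every vertex of `C` to `u₃, u₁`, and all remaining edges are consecutive along some
fixed orderings (paths) of `A`, `B`, `C`. -/
def FWitness {V : Type*} [Fintype V] [DecidableEq V] (G : SimpleGraph V) (u1 u2 u3 : V)
    (A B C : Finset V) : Prop :=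
  u1 ≠ u2 ∧ u1 ≠ u3 ∧ u2 ≠ u3 ∧
  u1 ∉ A ∪ B ∪ C ∧ u2 ∉ A ∪ B ∪ C ∧ u3 ∉ A ∪ B ∪ C ∧
  Disjoint A B ∧ Disjoint A C ∧ Disjoint B C ∧
  ({u1, u2, u3} : Finset V) ∪ A ∪ B ∪ C = Finset.univ ∧
  A.card + B.card + C.card = Fintype.card V - 3 ∧
  A.card ≤ B.card + 1 ∧ B.card ≤ A.card + 1 ∧
  A.card ≤ C.card + 1 ∧ C.card ≤ A.card + 1 ∧
  B.card ≤ C.card + 1 ∧ C.card ≤ B.card + 1 ∧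
  (∀ a ∈ A, G.Adj u1 a ∧ G.Adj u2 a) ∧
  (∀ b ∈ B, G.Adj u2 b ∧ G.Adj u3 b) ∧
  (∀ c ∈ C, G.Adj u3 c ∧ G.Adj u1 c) ∧
  ∃ la lb lc : List V,
    la.Nodup ∧ lb.Nodup ∧ lc.Nodup ∧
    la.toFinset = A ∧ lb.toFinset = B ∧ lc.toFinset = C ∧
    ∀ x y, G.Adj x y →
      (x = u1 ∧ (y ∈ A ∨ y ∈ C)) ∨ (y = u1 ∧ (x ∈ A ∨ x ∈ C)) ∨
      (x = u2 ∧ (y ∈ A ∨ y ∈ B)) ∨ (y = u2 ∧ (x ∈ A ∨ x ∈ B)) ∨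
      (x = u3 ∧ (y ∈ B ∨ y ∈ C)) ∨ (y = u3 ∧ (x ∈ B ∨ x ∈ C)) ∨
      ListConsec la x y ∨ ListConsec lb x y ∨ ListConsec lc x y

/-- `G` belongs to the family `𝓕_n`, where `n = Fintype.card V`. -/
def InFFamily {V : Type*} [Fintype V] [DecidableEq V] (G : SimpleGraph V) : Prop :=
  ∃ (u1 u2 u3 : V) (A B C : Finset V), FWitness G u1 u2 u3 A B C



section IndC6Aux

def pOK (m x y : Nat) : Bool := (m >>> (x*6+y)) % 2 == 1
def allowedN (x y : Nat) : Bool := pOK 40100628008 x y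
def forcedN (x y : Nat) : Bool := pOK 5470357032 x y
def dobN (x y : Nat) : Bool := pOK 68719460222 x y

def concN (a b c d e f : Nat) : Bool :=
  (a == 3 && b == 3 && c == 3 && d == 3 && e == 3 && f == 3) ||
  (a == 4 && b == 4 && c == 4 && d == 4 && e == 4 && f == 4) ||
  (a == 5 && b == 5 && c == 5 && d == 5 && e == 5 && f == 5) ||
  (!(a==b) && !(a==c) && !(a==d) && !(a==e) && !(a==f) && !(b==c) && !(b==d) && !(b==e) && !(b==f)
   && !(c==d) && !(c==e) && !(c==f) && !(d==e) && !(d==f) && !(e==f))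

def hypN (a b c d e f : Nat) : Bool :=
  allowedN a b && allowedN b c && allowedN c d && allowedN d e && allowedN e f && allowedN f a &&
  !forcedN a c && !forcedN c a && !forcedN b d && !forcedN d b && !forcedN c e && !forcedN e c &&
  !forcedN d f && !forcedN f d && !forcedN e a && !forcedN a e && !forcedN f b && !forcedN b f &&
  !forcedN a d && !forcedN d a && !forcedN b e && !forcedN e b && !forcedN c f && !forcedN f c &&
  dobN a b && dobN a c && dobN a d && dobN a e && dobN a f &&
  dobN b c && dobN b d && dobN b e && dobN b f &&
  dobN c d && dobN c e && dobN c f && dobN d e && dobN d f && dobN e f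

def preN (a b c : Nat) : Bool :=
  allowedN a b && allowedN b c && !forcedN a c && !forcedN c a && dobN a b && dobN a c && dobN b c

def innerLoop (a b c : Nat) : Nat → Bool
  | 0 => true
  | n + 1 => (!(hypN a b c (n % 6) (n / 6 % 6) (n / 36 % 6)) ||
              concN a b c (n % 6) (n / 6 % 6) (n / 36 % 6)) && innerLoop a b c n

def outerLoop : Nat → Bool
  | 0 => true
  | n + 1 => (!(preN (n % 6) (n / 6 % 6) (n / 36 % 6)) ||
              innerLoop (n % 6) (n / 6 % 6) (n / 36 % 6) 216) && outerLoop n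

set_option maxRecDepth 10000 in
set_option maxHeartbeats 4000000 in
theorem allCodes : outerLoop 216 = true := by decide

theorem innerLoop_spec {a b c : Nat} {N : Nat} (h : innerLoop a b c N = true) :
    ∀ n < N, hypN a b c (n % 6) (n / 6 % 6) (n / 36 % 6) = true →
      concN a b c (n % 6) (n / 6 % 6) (n / 36 % 6) = true := by
  induction N with
  | zero => omega
  | succ N ih =>
    rw [innerLoop, Bool.and_eq_true, Bool.or_eq_true, Bool.not_eq_true'] at h
    intro n hn hh
    rcases Nat.lt_succ_iff_lt_or_eq.1 hn with h' | h'
    · exact ih h.2 n h' hh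
    · subst h'; rcases h.1 with h' | h'
      · rw [hh] at h'; cases h'
      · exact h'

theorem outerLoop_spec {N : Nat} (h : outerLoop N = true) :
    ∀ n < N, preN (n % 6) (n / 6 % 6) (n / 36 % 6) = true →
      innerLoop (n % 6) (n / 6 % 6) (n / 36 % 6) 216 = true := by
  induction N with
  | zero => omega
  | succ N ih =>
    rw [outerLoop, Bool.and_eq_true, Bool.or_eq_true, Bool.not_eq_true'] at h
    intro n hn hh
    rcases Nat.lt_succ_iff_lt_or_eq.1 hn with h' | h'
    · exact ih h.2 n h' hh
    · subst h'; rcases h.1 with h' | h'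
      · rw [hh] at h'; cases h'
      · exact h' 

theorem hypN_pre {a b c d e f : Nat} (h : hypN a b c d e f = true) : preN a b c = true := by
  simp only [hypN, Bool.and_eq_true] at h
  simp only [preN, Bool.and_eq_true]
  tauto

theorem keyNat {a b c d e f : Nat} (ha : a < 6) (hb : b < 6) (hc : c < 6) (hd : d < 6)
    (he : e < 6) (hf : f < 6) (h : hypN a b c d e f = true) : concN a b c d e f = true := by
  have h1 : (a + 6*b + 36*c) < 216 := by omega
  have h2 : (d + 6*e + 36*f) < 216 := by omega
  have e1 : (a + 6*b + 36*c) % 6 = a := by omega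
  have e2 : (a + 6*b + 36*c) / 6 % 6 = b := by omega
  have e3 : (a + 6*b + 36*c) / 36 % 6 = c := by omega
  have e4 : (d + 6*e + 36*f) % 6 = d := by omega
  have e5 : (d + 6*e + 36*f) / 6 % 6 = e := by omega
  have e6 : (d + 6*e + 36*f) / 36 % 6 = f := by omega
  have := outerLoop_spec allCodes (a + 6*b + 36*c) h1
  rw [e1, e2, e3] at this
  have := innerLoop_spec (this (hypN_pre h)) (d + 6*e + 36*f) h2
  rw [e4, e5, e6] at this
  exact this h

theorem listConsec_mem {V : Type*} {l : List V} {x y : V} (h : ListConsec l x y) :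
    x ∈ l ∧ y ∈ l := by
  obtain ⟨i, h | h⟩ := h
  · exact ⟨List.mem_of_getElem? h.1, List.mem_of_getElem? h.2⟩
  · exact ⟨List.mem_of_getElem? h.2, List.mem_of_getElem? h.1⟩

theorem listConsec_idx {V : Type*} [DecidableEq V] {l : List V} (hnd : l.Nodup) {x y : V}
    (h : ListConsec l x y) :
    l.idxOf x + 1 = l.idxOf y ∨ l.idxOf y + 1 = l.idxOf x := by
  have key : ∀ i : ℕ, ∀ z : V, l[i]? = some z → l.idxOf z = i := by
    intro i z hz
    have hm : z ∈ l := List.mem_of_getElem? hz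
    have h2 : l[l.idxOf z]? = some z := List.getElem?_idxOf hm
    exact (List.getElem?_inj (List.idxOf_lt_length_iff.2 hm) hnd).1 (h2.trans hz.symm)
  obtain ⟨i, ⟨h1, h2⟩ | ⟨h1, h2⟩⟩ := h
  · left; rw [key i x h1, key (i+1) y h2]
  · right; rw [key i y h1, key (i+1) x h2]

theorem no_hex_in_path {V : Type*} [DecidableEq V] {l : List V} (hnd : l.Nodup)
    {v : Fin 6 → V} (hinj : Function.Injective v)
    (h : ∀ i : Fin 6, ListConsec l (v i) (v (i + 1))) : False := by
  set n : Fin 6 → ℕ := fun i => l.idxOf (v i) with hn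
  have hne : ∀ i j : Fin 6, i ≠ j → n i ≠ n j := by
    intro i j hij hEq
    have hmi : v i ∈ l := (listConsec_mem (h i)).1
    have hmj : v j ∈ l := (listConsec_mem (h j)).1
    exact hij (hinj ((List.idxOf_inj hmi).1 hEq))
  have hd : ∀ i : Fin 6, n i + 1 = n (i + 1) ∨ n (i + 1) + 1 = n i :=
    fun i => listConsec_idx hnd (h i)
  have d0 := hd 0; have d1 := hd 1; have d2 := hd 2
  have d3 := hd 3; have d4 := hd 4; have d5 := hd 5
  rw [show (0:Fin 6)+1 = 1 from rfl] at d0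
  rw [show (1:Fin 6)+1 = 2 from rfl] at d1
  rw [show (2:Fin 6)+1 = 3 from rfl] at d2
  rw [show (3:Fin 6)+1 = 4 from rfl] at d3
  rw [show (4:Fin 6)+1 = 5 from rfl] at d4
  rw [show (5:Fin 6)+1 = 0 from rfl] at d5
  have e01 := hne 0 1 (by decide); have e02 := hne 0 2 (by decide)
  have e03 := hne 0 3 (by decide); have e04 := hne 0 4 (by decide)
  have e05 := hne 0 5 (by decide); have e12 := hne 1 2 (by decide)
  have e13 := hne 1 3 (by decide); have e14 := hne 1 4 (by decide)
  have e15 := hne 1 5 (by decide); have e23 := hne 2 3 (by decide)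
  have e24 := hne 2 4 (by decide); have e25 := hne 2 5 (by decide)
  have e34 := hne 3 4 (by decide); have e35 := hne 3 5 (by decide)
  have e45 := hne 4 5 (by decide)
  omega

theorem dob_true : ∀ x y : Fin 6, (x = y → 3 ≤ x.val) → dobN x.val y.val = true := by decide

theorem charac {V : Type*} [Fintype V] [DecidableEq V] (G : SimpleGraph V)
    (u1 u2 u3 : V) (A B C : Finset V) (hF : FWitness G u1 u2 u3 A B C) (s : Finset V) :
    IsIndCycle G 6 s ↔
      ∃ a ∈ A, ∃ b ∈ B, ∃ c ∈ C, s = ({u1, a, u2, b, u3, c} : Finset V) := by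
  obtain ⟨h12, h13, h23, hu1, hu2, hu3, hAB, hAC, hBC, hpart, -, -, -, -, -, -, -,
    hadjA, hadjB, hadjC, la, lb, lc, nda, ndb, ndc, fa, fb, fc, hclass⟩ := hF
  simp only [Finset.mem_union, not_or] at hu1 hu2 hu3
  obtain ⟨⟨hu1A, hu1B⟩, hu1C⟩ := hu1
  obtain ⟨⟨hu2A, hu2B⟩, hu2C⟩ := hu2
  obtain ⟨⟨hu3A, hu3B⟩, hu3C⟩ := hu3
  have memX : ∀ x : V, x = u1 ∨ x = u2 ∨ x = u3 ∨ x ∈ A ∨ x ∈ B ∨ x ∈ C := by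
    intro x
    have : x ∈ ({u1, u2, u3} : Finset V) ∪ A ∪ B ∪ C := hpart ▸ Finset.mem_univ x
    simpa [Finset.mem_union, Finset.mem_insert, Finset.mem_singleton, or_assoc] using this
  set ℓ : V → Fin 6 := fun x =>
    if x = u1 then 0 else if x = u2 then 1 else if x = u3 then 2
    else if x ∈ A then 3 else if x ∈ B then 4 else 5 with hℓ
  have labU1 : ℓ u1 = 0 := by simp [hℓ]
  have labU2 : ℓ u2 = 1 := by simp [hℓ, Ne.symm h12]
  have labU3 : ℓ u3 = 2 := by simp [hℓ, Ne.symm h13, Ne.symm h23]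
  have labA : ∀ x ∈ A, ℓ x = 3 := by
    intro x hx
    have e1 : x ≠ u1 := fun e => hu1A (e ▸ hx)
    have e2 : x ≠ u2 := fun e => hu2A (e ▸ hx)
    have e3 : x ≠ u3 := fun e => hu3A (e ▸ hx)
    simp [hℓ, e1, e2, e3, hx]
  have labB : ∀ x ∈ B, ℓ x = 4 := by
    intro x hx
    have e1 : x ≠ u1 := fun e => hu1B (e ▸ hx)
    have e2 : x ≠ u2 := fun e => hu2B (e ▸ hx)
    have e3 : x ≠ u3 := fun e => hu3B (e ▸ hx)
    have e4 : x ∉ A := fun h => Finset.disjoint_left.1 hAB h hx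
    simp [hℓ, e1, e2, e3, e4, hx]
  have labC : ∀ x ∈ C, ℓ x = 5 := by
    intro x hx
    have e1 : x ≠ u1 := fun e => hu1C (e ▸ hx)
    have e2 : x ≠ u2 := fun e => hu2C (e ▸ hx)
    have e3 : x ≠ u3 := fun e => hu3C (e ▸ hx)
    have e4 : x ∉ A := fun h => Finset.disjoint_left.1 hAC h hx
    have e5 : x ∉ B := fun h => Finset.disjoint_left.1 hBC h hx
    simp [hℓ, e1, e2, e3, e4, e5]
  have labfull : ∀ x : V, (x = u1 ∧ ℓ x = 0) ∨ (x = u2 ∧ ℓ x = 1) ∨ (x = u3 ∧ ℓ x = 2) ∨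
      (x ∈ A ∧ ℓ x = 3) ∨ (x ∈ B ∧ ℓ x = 4) ∨ (x ∈ C ∧ ℓ x = 5) := by
    intro x
    rcases memX x with h | h | h | h | h | h
    · exact Or.inl ⟨h, h ▸ labU1⟩
    · exact Or.inr (Or.inl ⟨h, h ▸ labU2⟩)
    · exact Or.inr (Or.inr (Or.inl ⟨h, h ▸ labU3⟩))
    · exact Or.inr (Or.inr (Or.inr (Or.inl ⟨h, labA x h⟩)))
    · exact Or.inr (Or.inr (Or.inr (Or.inr (Or.inl ⟨h, labB x h⟩))))
    · exact Or.inr (Or.inr (Or.inr (Or.inr (Or.inr ⟨h, labC x h⟩))))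
  have inv0 : ∀ z, ℓ z = 0 → z = u1 := by
    intro z hz
    rcases labfull z with ⟨e, h⟩ | ⟨e, h⟩ | ⟨e, h⟩ | ⟨e, h⟩ | ⟨e, h⟩ | ⟨e, h⟩ <;>
      rw [h] at hz <;> first | exact e | exact absurd hz (by decide)
  have inv1 : ∀ z, ℓ z = 1 → z = u2 := by
    intro z hz
    rcases labfull z with ⟨e, h⟩ | ⟨e, h⟩ | ⟨e, h⟩ | ⟨e, h⟩ | ⟨e, h⟩ | ⟨e, h⟩ <;>
      rw [h] at hz <;> first | exact e | exact absurd hz (by decide)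
  have inv2 : ∀ z, ℓ z = 2 → z = u3 := by
    intro z hz
    rcases labfull z with ⟨e, h⟩ | ⟨e, h⟩ | ⟨e, h⟩ | ⟨e, h⟩ | ⟨e, h⟩ | ⟨e, h⟩ <;>
      rw [h] at hz <;> first | exact e | exact absurd hz (by decide)
  have inv3 : ∀ z, ℓ z = 3 → z ∈ A := by
    intro z hz
    rcases labfull z with ⟨e, h⟩ | ⟨e, h⟩ | ⟨e, h⟩ | ⟨e, h⟩ | ⟨e, h⟩ | ⟨e, h⟩ <;>
      rw [h] at hz <;> first | exact e | exact absurd hz (by decide)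
  have inv4 : ∀ z, ℓ z = 4 → z ∈ B := by
    intro z hz
    rcases labfull z with ⟨e, h⟩ | ⟨e, h⟩ | ⟨e, h⟩ | ⟨e, h⟩ | ⟨e, h⟩ | ⟨e, h⟩ <;>
      rw [h] at hz <;> first | exact e | exact absurd hz (by decide)
  have inv5 : ∀ z, ℓ z = 5 → z ∈ C := by
    intro z hz
    rcases labfull z with ⟨e, h⟩ | ⟨e, h⟩ | ⟨e, h⟩ | ⟨e, h⟩ | ⟨e, h⟩ | ⟨e, h⟩ <;>
      rw [h] at hz <;> first | exact e | exact absurd hz (by decide)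
  have memla : ∀ z w : V, ListConsec la z w → z ∈ A ∧ w ∈ A := by
    intro z w h
    obtain ⟨m1, m2⟩ := listConsec_mem h
    exact ⟨fa ▸ List.mem_toFinset.2 m1, fa ▸ List.mem_toFinset.2 m2⟩
  have memlb : ∀ z w : V, ListConsec lb z w → z ∈ B ∧ w ∈ B := by
    intro z w h
    obtain ⟨m1, m2⟩ := listConsec_mem h
    exact ⟨fb ▸ List.mem_toFinset.2 m1, fb ▸ List.mem_toFinset.2 m2⟩
  have memlc : ∀ z w : V, ListConsec lc z w → z ∈ C ∧ w ∈ C := by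
    intro z w h
    obtain ⟨m1, m2⟩ := listConsec_mem h
    exact ⟨fc ▸ List.mem_toFinset.2 m1, fc ▸ List.mem_toFinset.2 m2⟩
  have adjAllowed : ∀ x y : V, G.Adj x y → allowedN (ℓ x).val (ℓ y).val = true := by
    intro x y h
    rcases hclass x y h with ⟨e, hy⟩ | ⟨e, hy⟩ | ⟨e, hy⟩ | ⟨e, hy⟩ | ⟨e, hy⟩ | ⟨e, hy⟩
      | hcc | hcc | hcc
    · subst e; rw [labU1]
      rcases hy with hy | hy
      · rw [labA y hy]; decide
      · rw [labC y hy]; decide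
    · subst e; rw [labU1]
      rcases hy with hy | hy
      · rw [labA x hy]; decide
      · rw [labC x hy]; decide
    · subst e; rw [labU2]
      rcases hy with hy | hy
      · rw [labA y hy]; decide
      · rw [labB y hy]; decide
    · subst e; rw [labU2]
      rcases hy with hy | hy
      · rw [labA x hy]; decide
      · rw [labB x hy]; decide
    · subst e; rw [labU3]
      rcases hy with hy | hy
      · rw [labB y hy]; decide
      · rw [labC y hy]; decide
    · subst e; rw [labU3]
      rcases hy with hy | hy
      · rw [labB x hy]; decide
      · rw [labC x hy]; decide
    · obtain ⟨m1, m2⟩ := memla _ _ hcc; rw [labA x m1, labA y m2]; decide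
    · obtain ⟨m1, m2⟩ := memlb _ _ hcc; rw [labB x m1, labB y m2]; decide
    · obtain ⟨m1, m2⟩ := memlc _ _ hcc; rw [labC x m1, labC y m2]; decide
  have forcedAdj : ∀ x y : V, forcedN (ℓ x).val (ℓ y).val = true → G.Adj x y := by
    intro x y hfc
    rcases labfull x with ⟨ex, hx⟩ | ⟨ex, hx⟩ | ⟨ex, hx⟩ | ⟨ex, hx⟩ | ⟨ex, hx⟩ | ⟨ex, hx⟩ <;>
      rcases labfull y with ⟨ey, hy⟩ | ⟨ey, hy⟩ | ⟨ey, hy⟩ | ⟨ey, hy⟩ | ⟨ey, hy⟩ | ⟨ey, hy⟩ <;>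
      rw [hx, hy] at hfc <;>
      first
        | exact absurd hfc (by decide)
        | (subst ex; first
            | exact (hadjA y ey).1
            | exact (hadjA y ey).2
            | exact (hadjB y ey).1
            | exact (hadjB y ey).2
            | exact (hadjC y ey).1
            | exact (hadjC y ey).2)
        | (subst ey; first
            | exact (hadjA x ex).1.symm
            | exact (hadjA x ex).2.symm
            | exact (hadjB x ex).1.symm
            | exact (hadjB x ex).2.symm
            | exact (hadjC x ex).1.symm
            | exact (hadjC x ex).2.symm)
  constructor
  · rintro ⟨hcard, ⟨φ⟩⟩
    set v : Fin 6 → V := fun i => ((φ.symm i : (↑s : Set V)) : V) with hv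
    have hvmem : ∀ i, v i ∈ s := fun i => (φ.symm i).2
    have hvinj : Function.Injective v := by
      intro i j hij
      exact φ.symm.toEquiv.injective (Subtype.ext hij)
    have hadj : ∀ i j, G.Adj (v i) (v j) ↔ (cycleGraph 6).Adj i j := by
      intro i j
      exact φ.symm.map_adj_iff
    have hvsurj : ∀ x ∈ s, ∃ i, v i = x := by
      intro x hx
      exact ⟨φ ⟨x, by simpa using hx⟩, by simp [hv]⟩
    set L : Fin 6 → Fin 6 := fun i => ℓ (v i) with hL
    have cyc_succ : ∀ i : Fin 6, (cycleGraph 6).Adj i (i + 1) := by decide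
    have h1 : ∀ i : Fin 6, allowedN (L i).val (L (i + 1)).val = true :=
      fun i => adjAllowed _ _ ((hadj _ _).2 (cyc_succ i))
    have h2 : ∀ i j : Fin 6, ¬(cycleGraph 6).Adj i j → i ≠ j →
        forcedN (L i).val (L j).val = false := by
      intro i j hna hne
      cases hb : forcedN (L i).val (L j).val
      · rfl
      · exact absurd ((hadj i j).1 (forcedAdj _ _ hb)) hna
    have h3 : ∀ i j : Fin 6, i ≠ j → L i = L j → 3 ≤ (L i).val := by
      intro i j hne hEq
      by_contra hlt
      have hval : (L i).val = 0 ∨ (L i).val = 1 ∨ (L i).val = 2 := by omega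
      have key : v i = v j := by
        rcases hval with h | h | h
        · exact (inv0 _ (Fin.ext h)).trans (inv0 _ (Fin.ext ((congrArg Fin.val hEq).symm.trans h))).symm
        · exact (inv1 _ (Fin.ext h)).trans (inv1 _ (Fin.ext ((congrArg Fin.val hEq).symm.trans h))).symm
        · exact (inv2 _ (Fin.ext h)).trans (inv2 _ (Fin.ext ((congrArg Fin.val hEq).symm.trans h))).symm
      exact hne (hvinj key)
    have a01 := h1 0; have a12 := h1 1; have a23 := h1 2
    have a34 := h1 3; have a45 := h1 4; have a50 := h1 5
    rw [show (0:Fin 6)+1 = 1 by decide] at a01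
    rw [show (1:Fin 6)+1 = 2 by decide] at a12
    rw [show (2:Fin 6)+1 = 3 by decide] at a23
    rw [show (3:Fin 6)+1 = 4 by decide] at a34
    rw [show (4:Fin 6)+1 = 5 by decide] at a45
    rw [show (5:Fin 6)+1 = 0 by decide] at a50
    have f02 := h2 0 2 (by decide) (by decide)
    have f20 := h2 2 0 (by decide) (by decide)
    have f13 := h2 1 3 (by decide) (by decide)
    have f31 := h2 3 1 (by decide) (by decide)
    have f24 := h2 2 4 (by decide) (by decide)
    have f42 := h2 4 2 (by decide) (by decide)
    have f35 := h2 3 5 (by decide) (by decide)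
    have f53 := h2 5 3 (by decide) (by decide)
    have f40 := h2 4 0 (by decide) (by decide)
    have f04 := h2 0 4 (by decide) (by decide)
    have f51 := h2 5 1 (by decide) (by decide)
    have f15 := h2 1 5 (by decide) (by decide)
    have f03 := h2 0 3 (by decide) (by decide)
    have f30 := h2 3 0 (by decide) (by decide)
    have f14 := h2 1 4 (by decide) (by decide)
    have f41 := h2 4 1 (by decide) (by decide)
    have f25 := h2 2 5 (by decide) (by decide)
    have f52 := h2 5 2 (by decide) (by decide)
    have d01 := dob_true (L 0) (L 1) (h3 0 1 (by decide))
    have d02 := dob_true (L 0) (L 2) (h3 0 2 (by decide))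
    have d03 := dob_true (L 0) (L 3) (h3 0 3 (by decide))
    have d04 := dob_true (L 0) (L 4) (h3 0 4 (by decide))
    have d05 := dob_true (L 0) (L 5) (h3 0 5 (by decide))
    have d12 := dob_true (L 1) (L 2) (h3 1 2 (by decide))
    have d13 := dob_true (L 1) (L 3) (h3 1 3 (by decide))
    have d14 := dob_true (L 1) (L 4) (h3 1 4 (by decide))
    have d15 := dob_true (L 1) (L 5) (h3 1 5 (by decide))
    have d23 := dob_true (L 2) (L 3) (h3 2 3 (by decide))
    have d24 := dob_true (L 2) (L 4) (h3 2 4 (by decide))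
    have d25 := dob_true (L 2) (L 5) (h3 2 5 (by decide))
    have d34 := dob_true (L 3) (L 4) (h3 3 4 (by decide))
    have d35 := dob_true (L 3) (L 5) (h3 3 5 (by decide))
    have d45 := dob_true (L 4) (L 5) (h3 4 5 (by decide))
    have hbig : hypN (L 0).val (L 1).val (L 2).val (L 3).val (L 4).val (L 5).val = true := by
      simp only [hypN, a01, a12, a23, a34, a45, a50, f02, f20, f13, f31, f24, f42, f35, f53,
        f40, f04, f51, f15, f03, f30, f14, f41, f25, f52, d01, d02, d03, d04, d05, d12, d13,
        d14, d15, d23, d24, d25, d34, d35, d45, Bool.not_false, Bool.and_self]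
    have hconc := keyNat (L 0).isLt (L 1).isLt (L 2).isLt (L 3).isLt (L 4).isLt (L 5).isLt hbig
    simp only [concN, Bool.or_eq_true, Bool.and_eq_true, beq_iff_eq, Bool.not_eq_true',
      beq_eq_false_iff_ne, ne_eq] at hconc
    have hvfull : ∀ i : Fin 6, (L i).val = (L 0).val ∨ (L i).val = (L 1).val ∨
        (L i).val = (L 2).val ∨ (L i).val = (L 3).val ∨ (L i).val = (L 4).val ∨
        (L i).val = (L 5).val := by
      intro i; fin_cases i <;> simp
    rcases hconc with ((hc | hc) | hc) | hc
    · -- all labels 3 : everything in A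
      have hA : ∀ i : Fin 6, v i ∈ A := by
        intro i
        apply inv3
        apply Fin.ext
        show (L i).val = ((3:Fin 6)).val
        rw [show ((3:Fin 6)).val = 3 from rfl]
        rcases hvfull i with h | h | h | h | h | h <;> omega
      have hconsec : ∀ i : Fin 6, ListConsec la (v i) (v (i + 1)) := by
        intro i
        have hGa : G.Adj (v i) (v (i + 1)) := (hadj _ _).2 (cyc_succ i)
        rcases hclass _ _ hGa with ⟨e, -⟩ | ⟨e, -⟩ | ⟨e, -⟩ | ⟨e, -⟩ | ⟨e, -⟩ | ⟨e, -⟩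
          | hcc | hcc | hcc
        · exact absurd (e ▸ hA i) hu1A
        · exact absurd (e ▸ hA (i + 1)) hu1A
        · exact absurd (e ▸ hA i) hu2A
        · exact absurd (e ▸ hA (i + 1)) hu2A
        · exact absurd (e ▸ hA i) hu3A
        · exact absurd (e ▸ hA (i + 1)) hu3A
        · exact hcc
        · exact absurd (memlb _ _ hcc).1 (Finset.disjoint_left.1 hAB (hA i))
        · exact absurd (memlc _ _ hcc).1 (Finset.disjoint_left.1 hAC (hA i))
      exact absurd hconsec (fun h => no_hex_in_path nda hvinj h)
    · -- all labels 4 : everything in B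
      have hA : ∀ i : Fin 6, v i ∈ B := by
        intro i
        apply inv4
        apply Fin.ext
        show (L i).val = ((4:Fin 6)).val
        rw [show ((4:Fin 6)).val = 4 from rfl]
        rcases hvfull i with h | h | h | h | h | h <;> omega
      have hconsec : ∀ i : Fin 6, ListConsec lb (v i) (v (i + 1)) := by
        intro i
        have hGa : G.Adj (v i) (v (i + 1)) := (hadj _ _).2 (cyc_succ i)
        rcases hclass _ _ hGa with ⟨e, -⟩ | ⟨e, -⟩ | ⟨e, -⟩ | ⟨e, -⟩ | ⟨e, -⟩ | ⟨e, -⟩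
          | hcc | hcc | hcc
        · exact absurd (e ▸ hA i) hu1B
        · exact absurd (e ▸ hA (i + 1)) hu1B
        · exact absurd (e ▸ hA i) hu2B
        · exact absurd (e ▸ hA (i + 1)) hu2B
        · exact absurd (e ▸ hA i) hu3B
        · exact absurd (e ▸ hA (i + 1)) hu3B
        · exact absurd (memla _ _ hcc).1 (Finset.disjoint_right.1 hAB (hA i))
        · exact hcc
        · exact absurd (memlc _ _ hcc).1 (Finset.disjoint_left.1 hBC (hA i))
      exact absurd hconsec (fun h => no_hex_in_path ndb hvinj h)
    · -- all labels 5 : everything in C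
      have hA : ∀ i : Fin 6, v i ∈ C := by
        intro i
        apply inv5
        apply Fin.ext
        show (L i).val = ((5:Fin 6)).val
        rw [show ((5:Fin 6)).val = 5 from rfl]
        rcases hvfull i with h | h | h | h | h | h <;> omega
      have hconsec : ∀ i : Fin 6, ListConsec lc (v i) (v (i + 1)) := by
        intro i
        have hGa : G.Adj (v i) (v (i + 1)) := (hadj _ _).2 (cyc_succ i)
        rcases hclass _ _ hGa with ⟨e, -⟩ | ⟨e, -⟩ | ⟨e, -⟩ | ⟨e, -⟩ | ⟨e, -⟩ | ⟨e, -⟩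
          | hcc | hcc | hcc
        · exact absurd (e ▸ hA i) hu1C
        · exact absurd (e ▸ hA (i + 1)) hu1C
        · exact absurd (e ▸ hA i) hu2C
        · exact absurd (e ▸ hA (i + 1)) hu2C
        · exact absurd (e ▸ hA i) hu3C
        · exact absurd (e ▸ hA (i + 1)) hu3C
        · exact absurd (memla _ _ hcc).1 (Finset.disjoint_right.1 hAC (hA i))
        · exact absurd (memlb _ _ hcc).1 (Finset.disjoint_right.1 hBC (hA i))
        · exact hcc
      exact absurd hconsec (fun h => no_hex_in_path ndc hvinj h)
    · -- all labels distinct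
      obtain ⟨⟨⟨⟨⟨⟨⟨⟨⟨⟨⟨⟨⟨⟨q01,q02⟩,q03⟩,q04⟩,q05⟩,q12⟩,q13⟩,q14⟩,q15⟩,q23⟩,q24⟩,q25⟩,q34⟩,q35⟩,q45⟩ := hc
      have hLinj : Function.Injective L := by
        intro i j hij
        have hv' : (L i).val = (L j).val := congrArg Fin.val hij
        clear_value L
        clear * - q01 q02 q03 q04 q05 q12 q13 q14 q15 q23 q24 q25 q34 q35 q45 hv' i j
        fin_cases i <;> fin_cases j <;> simp_all
      have hLbij : Function.Bijective L := Finite.injective_iff_bijective.1 hLinj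
      obtain ⟨i0, hi0⟩ := hLbij.2 0
      obtain ⟨i1, hi1⟩ := hLbij.2 1
      obtain ⟨i2, hi2⟩ := hLbij.2 2
      obtain ⟨i3, hi3⟩ := hLbij.2 3
      obtain ⟨i4, hi4⟩ := hLbij.2 4
      obtain ⟨i5, hi5⟩ := hLbij.2 5
      have hva : v i3 ∈ A := inv3 _ hi3
      have hvb : v i4 ∈ B := inv4 _ hi4
      have hvc : v i5 ∈ C := inv5 _ hi5
      have hvu1 : v i0 = u1 := inv0 _ hi0
      have hvu2 : v i1 = u2 := inv1 _ hi1
      have hvu3 : v i2 = u3 := inv2 _ hi2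
      refine ⟨v i3, hva, v i4, hvb, v i5, hvc, ?_⟩
      apply Finset.Subset.antisymm
      · intro x hx
        obtain ⟨i, rfl⟩ := hvsurj x hx
        simp only [Finset.mem_insert, Finset.mem_singleton]
        rcases labfull (v i) with ⟨e, h⟩ | ⟨e, h⟩ | ⟨e, h⟩ | ⟨e, h⟩ | ⟨e, h⟩ | ⟨e, h⟩
        · exact Or.inl e
        · exact Or.inr (Or.inr (Or.inl e))
        · exact Or.inr (Or.inr (Or.inr (Or.inr (Or.inl e))))
        · have : i = i3 := hLinj (h.trans hi3.symm)
          exact Or.inr (Or.inl (by rw [this]))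
        · have : i = i4 := hLinj (h.trans hi4.symm)
          exact Or.inr (Or.inr (Or.inr (Or.inl (by rw [this]))))
        · have : i = i5 := hLinj (h.trans hi5.symm)
          exact Or.inr (Or.inr (Or.inr (Or.inr (Or.inr (by rw [this])))))
      · intro x hx
        simp only [Finset.mem_insert, Finset.mem_singleton] at hx
        rcases hx with rfl | rfl | rfl | rfl | rfl | rfl
        · exact hvu1 ▸ hvmem i0
        · exact hvmem i3
        · exact hvu2 ▸ hvmem i1
        · exact hvmem i4
        · exact hvu3 ▸ hvmem i2
        · exact hvmem i5
  · rintro ⟨a, ha, b, hb, c, hc, rfl⟩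
    have n1a : u1 ≠ a := fun e => hu1A (e ▸ ha)
    have n2a : u2 ≠ a := fun e => hu2A (e ▸ ha)
    have n3a : u3 ≠ a := fun e => hu3A (e ▸ ha)
    have n1b : u1 ≠ b := fun e => hu1B (e ▸ hb)
    have n2b : u2 ≠ b := fun e => hu2B (e ▸ hb)
    have n3b : u3 ≠ b := fun e => hu3B (e ▸ hb)
    have n1c : u1 ≠ c := fun e => hu1C (e ▸ hc)
    have n2c : u2 ≠ c := fun e => hu2C (e ▸ hc)
    have n3c : u3 ≠ c := fun e => hu3C (e ▸ hc)
    have nab : a ≠ b := fun e => Finset.disjoint_left.1 hAB (e ▸ ha) hb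
    have nac : a ≠ c := fun e => Finset.disjoint_left.1 hAC (e ▸ ha) hc
    have nbc : b ≠ c := fun e => Finset.disjoint_left.1 hBC (e ▸ hb) hc
    have hcard6 : ({u1, a, u2, b, u3, c} : Finset V).card = 6 := by
      rw [Finset.card_insert_of_notMem (by simp [n1a, h12, n1b, h13, n1c]),
        Finset.card_insert_of_notMem (by simp [Ne.symm n2a, nab, Ne.symm n3a, nac]),
        Finset.card_insert_of_notMem (by simp [n2b, h23, n2c]),
        Finset.card_insert_of_notMem (by simp [Ne.symm n3b, nbc]),
        Finset.card_insert_of_notMem (by simp [n3c]), Finset.card_singleton]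
    have a1 := (hadjA a ha).1
    have a2 := (hadjA a ha).2
    have b2 := (hadjB b hb).1
    have b3 := (hadjB b hb).2
    have c3 := (hadjC c hc).1
    have c1 := (hadjC c hc).2
    set t : Finset V := {u1, a, u2, b, u3, c} with ht
    set w : Fin 6 → V := ![u1, a, u2, b, u3, c] with hw
    have hlw : ∀ i : Fin 6, ℓ (w i) = ![0, 3, 1, 4, 2, 5] i := by
      intro i
      fin_cases i
      · simpa [hw] using labU1
      · simpa [hw] using labA a ha
      · simpa [hw] using labU2
      · simpa [hw] using labB b hb
      · simpa [hw] using labU3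
      · simpa [hw] using labC c hc
    have hGadj : ∀ i j : Fin 6, G.Adj (w i) (w j) ↔ (cycleGraph 6).Adj i j := by
      intro i j
      constructor
      · intro h
        have h2 := adjAllowed _ _ h
        rw [hlw i, hlw j] at h2
        revert h2
        fin_cases i <;> fin_cases j <;> intro h2 <;>
          first | exact absurd h G.irrefl | exact absurd h2 (by decide) | decide
      · intro hcyc
        fin_cases i <;> fin_cases j <;>
          first
            | exact absurd hcyc (by decide)
            | exact a1 | exact a1.symm | exact a2 | exact a2.symm
            | exact b2 | exact b2.symm | exact b3 | exact b3.symm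
            | exact c3 | exact c3.symm | exact c1 | exact c1.symm
    have hmem : ∀ i : Fin 6, w i ∈ t := by
      intro i
      fin_cases i
      · show u1 ∈ t; simp [ht]
      · show a ∈ t; simp [ht]
      · show u2 ∈ t; simp [ht]
      · show b ∈ t; simp [ht]
      · show u3 ∈ t; simp [ht]
      · show c ∈ t; simp [ht]
    have hwinj : Function.Injective w := by
      intro i j hij
      have hlij : (![0, 3, 1, 4, 2, 5] : Fin 6 → Fin 6) i = ![0, 3, 1, 4, 2, 5] j := by
        rw [← hlw i, ← hlw j, hij]
      revert hlij
      fin_cases i <;> fin_cases j <;> intro h' <;>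
        first | rfl | exact absurd h' (by decide)
    have hbij : Function.Bijective (fun i => (⟨w i, hmem i⟩ : (↑t : Set V))) := by
      constructor
      · intro i j hij
        exact hwinj (congrArg Subtype.val hij)
      · rintro ⟨x, hx⟩
        have hx' : x ∈ t := hx
        rw [ht] at hx'
        simp only [Finset.mem_insert, Finset.mem_singleton] at hx'
        rcases hx' with rfl | rfl | rfl | rfl | rfl | rfl
        · exact ⟨0, Subtype.ext rfl⟩
        · exact ⟨1, Subtype.ext rfl⟩
        · exact ⟨2, Subtype.ext rfl⟩
        · exact ⟨3, Subtype.ext rfl⟩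
        · exact ⟨4, Subtype.ext rfl⟩
        · exact ⟨5, Subtype.ext rfl⟩
    refine ⟨hcard6, ⟨RelIso.symm ⟨Equiv.ofBijective _ hbij, ?_⟩⟩⟩
    intro i j
    exact hGadj i j

theorem arith (p q r n : ℕ) (hn : 6 ≤ n) (hsum : p + q + r = n - 3)
    (b1 : p ≤ q + 1) (b2 : q ≤ p + 1) (b3 : p ≤ r + 1) (b4 : r ≤ p + 1)
    (b5 : q ≤ r + 1) (b6 : r ≤ q + 1) : p * q * r = h0 n := by
  unfold h0
  by_cases h3 : n % 3 = 0
  · have hp : p = n / 3 - 1 := by omega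
    have hq : q = n / 3 - 1 := by omega
    have hr : r = n / 3 - 1 := by omega
    rw [if_pos h3, hp, hq, hr]
    ring
  · by_cases h4 : n % 3 = 1
    · have : (p = (n-4)/3 ∧ q = (n-4)/3 ∧ r = (n-1)/3) ∨
          (p = (n-4)/3 ∧ q = (n-1)/3 ∧ r = (n-4)/3) ∨
          (p = (n-1)/3 ∧ q = (n-4)/3 ∧ r = (n-4)/3) := by omega
      rw [if_neg h3, if_pos h4]
      rcases this with ⟨hp, hq, hr⟩ | ⟨hp, hq, hr⟩ | ⟨hp, hq, hr⟩ <;> rw [hp, hq, hr] <;> ring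
    · have h5 : n % 3 = 2 := by omega
      have : (p = (n-5)/3 ∧ q = (n-2)/3 ∧ r = (n-2)/3) ∨
          (p = (n-2)/3 ∧ q = (n-5)/3 ∧ r = (n-2)/3) ∨
          (p = (n-2)/3 ∧ q = (n-2)/3 ∧ r = (n-5)/3) := by omega
      rw [if_neg h3, if_neg h4]
      rcases this with ⟨hp, hq, hr⟩ | ⟨hp, hq, hr⟩ | ⟨hp, hq, hr⟩ <;> rw [hp, hq, hr] <;> ring

theorem stmt13_aux {V : Type*} [Fintype V] [DecidableEq V] (n : ℕ) (hn : 6 ≤ n)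
    (hV : Fintype.card V = n) (G : SimpleGraph V) (u1 u2 u3 : V) (A B C : Finset V)
    (hF : FWitness G u1 u2 u3 A B C) :
    c6Count G = h0 n ∧
    ∀ s : Finset V, IsIndCycle G 6 s ↔
      ∃ a ∈ A, ∃ b ∈ B, ∃ c ∈ C, s = ({u1, a, u2, b, u3, c} : Finset V) := by
  have hchar := charac G u1 u2 u3 A B C hF
  refine ⟨?_, hchar⟩
  obtain ⟨h12, h13, h23, hu1, hu2, hu3, hAB, hAC, hBC, hpart, hcard3,
    b1, b2, b3, b4, b5, b6, -, -, -, -⟩ := hF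
  simp only [Finset.mem_union, not_or] at hu1 hu2 hu3
  obtain ⟨⟨hu1A, hu1B⟩, hu1C⟩ := hu1
  obtain ⟨⟨hu2A, hu2B⟩, hu2C⟩ := hu2
  obtain ⟨⟨hu3A, hu3B⟩, hu3C⟩ := hu3
  set f : V × V × V → Finset V := fun p => {u1, p.1, u2, p.2.1, u3, p.2.2} with hf
  have hsetEq : {s : Finset V | IsIndCycle G 6 s} = ↑((A ×ˢ B ×ˢ C).image f) := by
    ext s
    simp only [Set.mem_setOf_eq, Finset.coe_image, Set.mem_image, Finset.mem_coe,
      Finset.mem_product, hchar s, hf]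
    constructor
    · rintro ⟨a, ha, b, hb, c, hc, rfl⟩
      exact ⟨(a, b, c), ⟨ha, hb, hc⟩, rfl⟩
    · rintro ⟨⟨a, b, c⟩, ⟨ha, hb, hc⟩, rfl⟩
      exact ⟨a, ha, b, hb, c, hc, rfl⟩
  have hinj : Set.InjOn f ↑(A ×ˢ B ×ˢ C) := by
    rintro ⟨a, b, c⟩ hp ⟨a', b', c'⟩ hq hEq
    simp only [Finset.coe_product, Set.mem_prod] at hp hq
    obtain ⟨ha0, hb0, hc0⟩ := hp
    obtain ⟨ha0', hb0', hc0'⟩ := hq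
    have ha : a ∈ A := ha0
    have hb : b ∈ B := hb0
    have hc : c ∈ C := hc0
    have ha' : a' ∈ A := ha0'
    have hb' : b' ∈ B := hb0'
    have hc' : c' ∈ C := hc0'
    simp only [hf] at hEq
    have hmema : a ∈ ({u1, a', u2, b', u3, c'} : Finset V) := by
      rw [← hEq]; simp
    have hmemb : b ∈ ({u1, a', u2, b', u3, c'} : Finset V) := by
      rw [← hEq]; simp
    have hmemc : c ∈ ({u1, a', u2, b', u3, c'} : Finset V) := by
      rw [← hEq]; simp
    simp only [Finset.mem_insert, Finset.mem_singleton] at hmema hmemb hmemc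
    have ea : a = a' := by
      rcases hmema with e | e | e | e | e | e
      · exact absurd (e ▸ ha) hu1A
      · exact e
      · exact absurd (e ▸ ha) hu2A
      · exact absurd (e ▸ ha) (Finset.disjoint_right.1 hAB hb')
      · exact absurd (e ▸ ha) hu3A
      · exact absurd (e ▸ ha) (Finset.disjoint_right.1 hAC hc')
    have eb : b = b' := by
      rcases hmemb with e | e | e | e | e | e
      · exact absurd (e ▸ hb) hu1B
      · exact absurd (e ▸ hb) (Finset.disjoint_left.1 hAB ha')
      · exact absurd (e ▸ hb) hu2B
      · exact e
      · exact absurd (e ▸ hb) hu3B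
      · exact absurd (e ▸ hb) (Finset.disjoint_right.1 hBC hc')
    have ec : c = c' := by
      rcases hmemc with e | e | e | e | e | e
      · exact absurd (e ▸ hc) hu1C
      · exact absurd (e ▸ hc) (Finset.disjoint_left.1 hAC ha')
      · exact absurd (e ▸ hc) hu2C
      · exact absurd (e ▸ hc) (Finset.disjoint_left.1 hBC hb')
      · exact absurd (e ▸ hc) hu3C
      · exact e
    rw [ea, eb, ec]
  rw [c6Count, hsetEq, Set.ncard_coe_finset, Finset.card_image_of_injOn hinj,
    Finset.card_product, Finset.card_product]
  have harith := arith A.card B.card C.card n hn (by rw [← hV]; exact hcard3)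
    b1 b2 b3 b4 b5 b6
  rw [← harith]; ring

end IndC6Aux

theorem stmt13 {V : Type*} [Fintype V] [DecidableEq V] (n : ℕ) (hn : 6 ≤ n)
    (hV : Fintype.card V = n) (G : SimpleGraph V) (u1 u2 u3 : V) (A B C : Finset V)
    (hF : FWitness G u1 u2 u3 A B C) :
    c6Count G = h0 n ∧
    ∀ s : Finset V, IsIndCycle G 6 s ↔
      ∃ a ∈ A, ∃ b ∈ B, ∃ c ∈ C, s = ({u1, a, u2, b, u3, c} : Finset V) := by
  exact stmt13_aux n hn hV G u1 u2 u3 A B C hF
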